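/- Let A ∈ ℝ^{n×n} satisfy (det A)² = 1. Then ‖A‖_F² ≥ n, with equality if and only if A is orthogonal (AᵀA = I_n). In other words, orthogonal matrices are exactly the matrices of minimal Frobenius norm among real square matrices with determinant ±1. -/

import Mathlib

open Matrix

theorem aux_trace_eq_sum {n : ℕ} {M : Matrix (Fin n) (Fin n) ℝ} (hM : M.IsHermitian) :
    Matrix.trace M = ∑ i, hM.eigenvalues i := by
  conv_lhs => rw [hM.spectral_theorem]
  rw [Unitary.conjStarAlgAut_apply, Matrix.trace_mul_cycle]
  rw [(Matrix.mem_unitaryGroup_iff').mp (hM.eigenvectorUnitary).2]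
  simp [Matrix.trace_diagonal]

/-- Orthogonal matrices are exactly the matrices of minimal Frobenius norm
among real square matrices with determinant ±1:
if `(det A)² = 1` then `‖A‖_F² = tr(AᵀA) ≥ n`, with equality iff `AᵀA = I`. -/
theorem orthogonal_min_frobenius {n : ℕ} (A : Matrix (Fin n) (Fin n) ℝ)
    (h : A.det ^ 2 = 1) :
    (n : ℝ) ≤ Matrix.trace (Aᵀ * A) ∧
      (Matrix.trace (Aᵀ * A) = (n : ℝ) ↔ Aᵀ * A = 1) := by
  have hT : Aᵀ = Aᴴ := by
    ext i j; simp [Matrix.conjTranspose_apply, Matrix.transpose_apply]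
  have hpsd : (Aᵀ * A).PosSemidef := by
    rw [hT]; exact Matrix.posSemidef_conjTranspose_mul_self A
  have hherm := hpsd.isHermitian
  set lam := hherm.eigenvalues with hlam
  have hnn : ∀ i, 0 ≤ lam i := hpsd.eigenvalues_nonneg
  have hdet : (Aᵀ * A).det = 1 := by
    rw [Matrix.det_mul, Matrix.det_transpose, ← sq, h]
  have hprod : ∏ i, lam i = 1 := by
    have := hherm.det_eq_prod_eigenvalues
    rw [hdet] at this
    exact_mod_cast this.symm
  have hpos : ∀ i, 0 < lam i := by
    intro i
    rcases lt_or_eq_of_le (hnn i) with hlt | heq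
    · exact hlt
    · exfalso
      have : ∏ j, lam j = 0 := Finset.prod_eq_zero (Finset.mem_univ i) heq.symm
      rw [hprod] at this; norm_num at this
  have htr : Matrix.trace (Aᵀ * A) = ∑ i, lam i := aux_trace_eq_sum hherm
  -- AM-GM via log: log x ≤ x - 1
  have hlogsum : ∑ i, Real.log (lam i) = 0 := by
    rw [← Real.log_prod (fun i _ => (hpos i).ne'), hprod, Real.log_one]
  have hkey : ∀ i, 0 ≤ lam i - 1 - Real.log (lam i) := by
    intro i
    have := Real.log_le_sub_one_of_pos (hpos i)
    linarith
  have hsumkey : ∑ i, (lam i - 1 - Real.log (lam i)) = ∑ i, lam i - n := by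
    simp [Finset.sum_sub_distrib, hlogsum]
  have hge : (n : ℝ) ≤ ∑ i, lam i := by
    have := Finset.sum_nonneg (s := Finset.univ) (fun i _ => hkey i)
    rw [hsumkey] at this; linarith
  refine ⟨htr ▸ hge, ?_, ?_⟩
  · intro heq
    -- equality case: all eigenvalues are 1
    have hzero : ∑ i, (lam i - 1 - Real.log (lam i)) = 0 := by
      rw [hsumkey, ← htr, heq]; ring
    have hall : ∀ i ∈ Finset.univ, lam i - 1 - Real.log (lam i) = 0 :=
      (Finset.sum_eq_zero_iff_of_nonneg (fun i _ => hkey i)).mp hzero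
    have hone : ∀ i, lam i = 1 := by
      intro i
      by_contra hne
      have := Real.log_lt_sub_one_of_pos (hpos i) hne
      have := hall i (Finset.mem_univ i)
      linarith
    have := hherm.spectral_theorem
    rw [this]
    have hdiag : Matrix.diagonal (RCLike.ofReal ∘ hherm.eigenvalues) =
        (1 : Matrix (Fin n) (Fin n) ℝ) := by
      ext i j
      by_cases hij : i = j
      · subst hij; simpa using hone i
      · simp [Matrix.diagonal_apply_ne _ hij, Matrix.one_apply_ne hij]
    rw [hdiag, Unitary.conjStarAlgAut_apply, mul_one]
    exact (Matrix.mem_unitaryGroup_iff).mp (hherm.eigenvectorUnitary).2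
  · intro heq
    rw [heq, Matrix.trace_one]
    simp
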